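/- Let K be a symmetric convex polytope in ℝ^n, let θ ∈ G_K and s_θ = min{s > 0 : g(θ,s) = 1}. Then for all s_θ ≤ s ≤ h_K(θ): f_{K,θ}(s) = f_{K,θ}(s_θ) · ((1 − s/h_K(θ)) / (1 − s_θ/h_K(θ)))^{n−1}. -/

import Mathlib

open MeasureTheory Filter Set Metric
open scoped RealInnerProductSpace Topology ENNReal NNReal

noncomputable section

/-- Euclidean space `ℝ^n`. -/
abbrev Euc (n : ℕ) := EuclideanSpace ℝ (Fin n)

/-- The support function `h_K(θ) = sup_{x ∈ K} ⟨x, θ⟩` of a set `K ⊆ ℝ^n`. -/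
noncomputable def suppFn {n : ℕ} (K : Set (Euc n)) (θ : Euc n) : ℝ :=
  sSup ((fun x => ⟪x, θ⟫) '' K)

/-- `g(θ, s)`: the number of vertices `v ∈ V` with `⟨v, θ⟩ ≥ s`. -/
noncomputable def gCount {n : ℕ} (V : Finset (Euc n)) (θ : Euc n) (s : ℝ) : ℕ :=
  {v ∈ (V : Set (Euc n)) | s ≤ ⟪v, θ⟫}.ncard

/-- `B_K`: the directions `θ ∈ S^{n-1}` with `g(θ,s) > 1` for all `s ≤ h_K(θ)`. -/
def badSet {n : ℕ} (K : Set (Euc n)) (V : Finset (Euc n)) : Set (Euc n) :=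
  {θ | ‖θ‖ = 1 ∧ ∀ s ≤ suppFn K θ, 1 < gCount V θ s}

/-- `G_K`: the directions `θ ∈ S^{n-1}` with `g(θ,s) = 1` for some `s < h_K(θ)`. -/
def goodSet {n : ℕ} (K : Set (Euc n)) (V : Finset (Euc n)) : Set (Euc n) :=
  {θ | ‖θ‖ = 1 ∧ ∃ s < suppFn K θ, gCount V θ s = 1}

/-- `s_θ = min {s > 0 : g(θ,s) = 1}`. -/
noncomputable def sTheta {n : ℕ} (V : Finset (Euc n)) (θ : Euc n) : ℝ :=
  sInf {s | 0 < s ∧ gCount V θ s = 1}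

/-- `A(δ)`: the directions `θ ∈ S^{n-1}` at distance `< δ` from some `u ∈ B_K`. -/
def Aset {n : ℕ} (K : Set (Euc n)) (V : Finset (Euc n)) (δ : ℝ) : Set (Euc n) :=
  {θ | ‖θ‖ = 1 ∧ ∃ u ∈ badSet K V, ‖θ - u‖ < δ}

/-- The parallel section function `f_{K,θ}(t) = vol_{n-1}(K ∩ (θ^⊥ + tθ))`, the
`(n-1)`-dimensional (Hausdorff) volume of the slice of `K` at height `t` in direction `θ`. -/
noncomputable def sliceVol {n : ℕ} (K : Set (Euc n)) (θ : Euc n) (t : ℝ) : ℝ :=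
  (μH[(n : ℝ) - 1] (K ∩ {x : Euc n | ⟪x, θ⟫ = t})).toReal

open scoped Pointwise

lemma cone_rep {n : ℕ} (V : Finset (Euc n)) (θ v : Euc n) (hvV : v ∈ V)
    (m σ : ℝ) (hm : ∀ w ∈ V, w ≠ v → ⟪w, θ⟫ ≤ m) (hmσ : m ≤ σ)
    (hσh : σ < ⟪v, θ⟫)
    (z₀ : Euc n) (hz₀ : z₀ ∈ convexHull ℝ (V : Set (Euc n))) (hz₀σ : ⟪z₀, θ⟫ ≤ σ)
    {x : Euc n} (hx : x ∈ convexHull ℝ (V : Set (Euc n))) :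
    ∃ y ∈ convexHull ℝ (V : Set (Euc n)), ⟪y, θ⟫ = σ ∧
      x = v + ((⟪v, θ⟫ - ⟪x, θ⟫) / (⟪v, θ⟫ - σ)) • (y - v) := by
  classical
  obtain ⟨w, hw0, hw1, hwx⟩ := Finset.mem_convexHull'.1 hx
  have hconv : Convex ℝ (convexHull ℝ (V : Set (Euc n))) := convex_convexHull ℝ _
  have hvhull : v ∈ convexHull ℝ (V : Set (Euc n)) := subset_convexHull ℝ _ hvV
  have hinner : ⟪x, θ⟫ = ∑ y ∈ V, w y * ⟪y, θ⟫ := by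
    rw [← hwx, sum_inner]
    exact Finset.sum_congr rfl fun y _ => real_inner_smul_left y θ (w y)
  have ha0 : 0 ≤ w v := hw0 v hvV
  have hWsum : ∑ y ∈ V.erase v, w y = 1 - w v := by
    have := Finset.sum_erase_add V w hvV
    linarith
  have hWx : ∑ y ∈ V.erase v, w y • y = x - w v • v := by
    have h2 := Finset.sum_erase_add V (fun y => w y • y) hvV
    rw [hwx] at h2
    rw [← h2]; abel
  have ha1 : w v ≤ 1 := by
    have : (0:ℝ) ≤ ∑ y ∈ V.erase v, w y :=
      Finset.sum_nonneg fun y hy => hw0 y (Finset.mem_erase.1 hy).2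
    linarith
  have key : ∀ z ∈ convexHull ℝ (V : Set (Euc n)), ⟪z, θ⟫ ≤ σ →
      ∃ y ∈ convexHull ℝ (V : Set (Euc n)), ⟪y, θ⟫ = σ ∧
        y - v = ((⟪v, θ⟫ - σ) / (⟪v, θ⟫ - ⟪z, θ⟫)) • (z - v) := by
    intro z hz hzσ
    have hch : ⟪z, θ⟫ < ⟪v, θ⟫ := lt_of_le_of_lt hzσ hσh
    have hchne : ⟪v, θ⟫ - ⟪z, θ⟫ ≠ 0 := by linarith
    have hβ0 : 0 ≤ (⟪v, θ⟫ - σ) / (⟪v, θ⟫ - ⟪z, θ⟫) := by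
      apply div_nonneg <;> linarith
    have hβ1 : (⟪v, θ⟫ - σ) / (⟪v, θ⟫ - ⟪z, θ⟫) ≤ 1 := by
      rw [div_le_one (by linarith)]; linarith
    refine ⟨v + ((⟪v, θ⟫ - σ) / (⟪v, θ⟫ - ⟪z, θ⟫)) • (z - v), ?_, ?_, by abel⟩
    · have heq : v + ((⟪v, θ⟫ - σ) / (⟪v, θ⟫ - ⟪z, θ⟫)) • (z - v) =
          (1 - (⟪v, θ⟫ - σ) / (⟪v, θ⟫ - ⟪z, θ⟫)) • v +
            ((⟪v, θ⟫ - σ) / (⟪v, θ⟫ - ⟪z, θ⟫)) • z := by module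
      rw [heq]
      exact hconv hvhull hz (by linarith) hβ0 (by ring)
    · rw [inner_add_left, real_inner_smul_left, inner_sub_left]
      have hgoal : ∀ A C : ℝ, A - C ≠ 0 → A + (A - σ) / (A - C) * (C - A) = σ := by
        intro A C hAC; field_simp; ring
      exact hgoal _ _ hchne
  rcases eq_or_lt_of_le ha1 with ha1' | ha1'
  · -- w v = 1 : x = v
    have hwz : ∀ y ∈ V.erase v, w y = 0 := by
      have hs0 : ∑ y ∈ V.erase v, w y = 0 := by rw [hWsum, ← ha1']; ring
      intro y hy
      exact (Finset.sum_eq_zero_iff_of_nonneg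
        (fun y hy => hw0 y (Finset.mem_erase.1 hy).2)).1 hs0 y hy
    have hxv : x = v := by
      have hz : ∑ y ∈ V.erase v, w y • y = 0 :=
        Finset.sum_eq_zero fun y hy => by rw [hwz y hy, zero_smul]
      rw [hz] at hWx
      have h3 : x - w v • v = 0 := hWx.symm
      rw [sub_eq_zero] at h3
      rw [h3, ha1', one_smul]
    obtain ⟨y, hy1, hy2, _⟩ := key z₀ hz₀ hz₀σ
    refine ⟨y, hy1, hy2, ?_⟩
    rw [hxv]
    simp
  · -- w v < 1
    have hane : (1:ℝ) - w v ≠ 0 := by linarith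
    set z := (1 - w v)⁻¹ • (x - w v • v) with hzdef
    have hzsum : z = ∑ y ∈ V.erase v, ((1 - w v)⁻¹ * w y) • y := by
      rw [hzdef, ← hWx, Finset.smul_sum]
      exact Finset.sum_congr rfl fun y _ => by rw [smul_smul]
    have hzhull : z ∈ convexHull ℝ (V : Set (Euc n)) := by
      have hcm := Finset.centerMass_mem_convexHull (V.erase v)
        (fun y hy => hw0 y (Finset.mem_erase.1 hy).2)
        (by rw [hWsum]; linarith)
        (fun y hy => Finset.mem_coe.2 (Finset.mem_erase.1 hy).2)
      rw [Finset.centerMass, hWsum] at hcm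
      simpa [← hWx, hzdef] using hcm
    have hc : ⟪z, θ⟫ ≤ m := by
      have hz1 : ⟪z, θ⟫ = ∑ y ∈ V.erase v, ((1 - w v)⁻¹ * w y) * ⟪y, θ⟫ := by
        rw [hzsum, sum_inner]
        exact Finset.sum_congr rfl fun y _ => real_inner_smul_left y θ _
      have hz2 : ∑ y ∈ V.erase v, ((1 - w v)⁻¹ * w y) * ⟪y, θ⟫ ≤
          ∑ y ∈ V.erase v, ((1 - w v)⁻¹ * w y) * m := by
        refine Finset.sum_le_sum fun y hy => ?_
        have hy' := Finset.mem_erase.1 hy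
        exact mul_le_mul_of_nonneg_left (hm y hy'.2 hy'.1)
          (mul_nonneg (inv_nonneg.2 (by linarith)) (hw0 y hy'.2))
      have hz3 : ∑ y ∈ V.erase v, ((1 - w v)⁻¹ * w y) * m = m := by
        rw [← Finset.sum_mul, ← Finset.mul_sum, hWsum]
        field_simp
      rw [hz1]
      rw [hz3] at hz2
      exact hz2
    have hxz : x = w v • v + (1 - w v) • z := by
      rw [hzdef, smul_inv_smul₀ hane]
      abel
    have ht_eq : ⟪x, θ⟫ = w v * ⟪v, θ⟫ + (1 - w v) * ⟪z, θ⟫ := by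
      conv_lhs => rw [hxz]
      rw [inner_add_left, real_inner_smul_left, real_inner_smul_left]
    obtain ⟨y, hy1, hy2, hy3⟩ := key z hzhull (hc.trans hmσ)
    refine ⟨y, hy1, hy2, ?_⟩
    rw [hy3, smul_smul]
    have hσne : ⟪v, θ⟫ - σ ≠ 0 := by linarith
    have hcne : ⟪v, θ⟫ - ⟪z, θ⟫ ≠ 0 := by
      have : ⟪z, θ⟫ ≤ σ := hc.trans hmσ
      linarith
    have hcoef : (⟪v, θ⟫ - ⟪x, θ⟫) / (⟪v, θ⟫ - σ) * ((⟪v, θ⟫ - σ) / (⟪v, θ⟫ - ⟪z, θ⟫)) =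
        1 - w v := by
      have h1 : ⟪v, θ⟫ - ⟪x, θ⟫ = (1 - w v) * (⟪v, θ⟫ - ⟪z, θ⟫) := by
        rw [ht_eq]; ring
      have habs : ∀ A S C t b : ℝ, A - S ≠ 0 → A - C ≠ 0 →
          A - t = b * (A - C) → (A - t) / (A - S) * ((A - S) / (A - C)) = b := by
        intro A S C t b hS hC h3
        rw [div_mul_div_comm, h3]
        field_simp
      exact habs _ _ _ _ _ hσne hcne h1
    rw [hcoef]
    conv_lhs => rw [hxz]
    module

/-- For a symmetric convex polytope `K`, `θ ∈ G_K` and `s_θ ≤ s ≤ h_K(θ)`: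
`f_{K,θ}(s) = f_{K,θ}(s_θ) ((1 - s/h_K(θ))/(1 - s_θ/h_K(θ)))^{n-1}`. -/
theorem stmt9 {n : ℕ} (K : Set (Euc n)) (V : Finset (Euc n))
    (hKV : K = convexHull ℝ (V : Set (Euc n)))
    (hVext : (V : Set (Euc n)) = K.extremePoints ℝ)
    (hsymm : ∀ x ∈ K, -x ∈ K)
    (θ : Euc n) (hθ : θ ∈ goodSet K V) :
    ∀ s : ℝ, sTheta V θ ≤ s → s ≤ suppFn K θ →
      sliceVol K θ s = sliceVol K θ (sTheta V θ) *
        ((1 - s / suppFn K θ) / (1 - sTheta V θ / suppFn K θ)) ^ (n - 1) := by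
  classical
  obtain ⟨hθ1, s₀, hs₀h, hgc⟩ := hθ
  intro s hs1 hs2
  have hKconv : Convex ℝ K := hKV ▸ convex_convexHull ℝ _
  have hVK : (V : Set (Euc n)) ⊆ K := hKV ▸ subset_convexHull ℝ _
  -- extract the unique top vertex
  rw [gCount, Set.ncard_eq_one] at hgc
  obtain ⟨v, hv⟩ := hgc
  have hvV : v ∈ V ∧ s₀ ≤ ⟪v, θ⟫ := by
    have : v ∈ {w ∈ (V : Set (Euc n)) | s₀ ≤ ⟪w, θ⟫} := hv ▸ rfl
    exact ⟨this.1, this.2⟩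
  have hother : ∀ w ∈ V, w ≠ v → ⟪w, θ⟫ < s₀ := by
    intro w hw hwv
    by_contra hc
    push_neg at hc
    have : w ∈ {w ∈ (V : Set (Euc n)) | s₀ ≤ ⟪w, θ⟫} := ⟨hw, hc⟩
    rw [hv] at this
    exact hwv this
  have hvK : v ∈ K := hVK hvV.1
  -- h = ⟪v, θ⟫
  have hub : ∀ x ∈ K, ⟪x, θ⟫ ≤ ⟪v, θ⟫ := by
    intro x hx
    rw [hKV] at hx
    have hlin : IsLinearMap ℝ (fun x : Euc n => ⟪x, θ⟫) :=
      ⟨fun a b => inner_add_left a b θ, fun c x => real_inner_smul_left x θ c⟩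
    have hsub : (convexHull ℝ (V : Set (Euc n))) ⊆ {y : Euc n | ⟪y, θ⟫ ≤ ⟪v, θ⟫} := by
      have hcvx : Convex ℝ {y : Euc n | ⟪y, θ⟫ ≤ ⟪v, θ⟫} := convex_halfSpace_le hlin ⟪v, θ⟫
      refine convexHull_min (fun w hw => ?_) hcvx
      simp only [Set.mem_setOf_eq]
      rcases eq_or_ne w v with rfl | hne
      · exact le_refl _
      · exact (hother w hw hne).le.trans hvV.2
    exact hsub hx
  have hhv : suppFn K θ = ⟪v, θ⟫ := by
    refine IsGreatest.csSup_eq ⟨⟨v, hvK, rfl⟩, ?_⟩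
    rintro y ⟨x, hx, rfl⟩
    exact hub x hx
  have h0K : (0 : Euc n) ∈ K := by
    have := hKconv hvK (hsymm v hvK) (by norm_num : (0:ℝ) ≤ 1/2) (by norm_num : (0:ℝ) ≤ 1/2)
      (by norm_num)
    simpa using this
  have hh0 : 0 ≤ suppFn K θ := by
    rw [hhv]
    simpa using hub 0 h0K
  rcases eq_or_lt_of_le hh0 with hh00 | hhpos
  · -- degenerate case: suppFn K θ = 0, forces K = {0}-like situation
    have hT : {s' : ℝ | 0 < s' ∧ gCount V θ s' = 1} = ∅ := by
      ext s'
      simp only [Set.mem_setOf_eq, Set.mem_empty_iff_false, iff_false, not_and]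
      intro hs' hg
      rw [gCount, Set.ncard_eq_one] at hg
      obtain ⟨u, hu⟩ := hg
      have hu1 : u ∈ {w ∈ (V : Set (Euc n)) | s' ≤ ⟪w, θ⟫} := hu ▸ rfl
      have h2 : ⟪u, θ⟫ ≤ 0 := by
        have h3 := hub u (hVK hu1.1)
        rw [← hhv, ← hh00] at h3
        exact h3
      linarith [hu1.2]
    have hst : sTheta V θ = 0 := by rw [sTheta, hT, Real.sInf_empty]
    have hs0' : s = 0 := le_antisymm (by rw [← hh00] at hs2; exact hs2) (by rw [← hst]; exact hs1)
    rw [hst, hs0', ← hh00]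
    simp
  · -- main case: 0 < suppFn K θ
    have hvh : ⟪v, θ⟫ = suppFn K θ := hhv.symm
    have hvpos : 0 < ⟪v, θ⟫ := by rw [hvh]; exact hhpos
    have hnegvV : -v ∈ V := by
      have hvE : v ∈ K.extremePoints ℝ := by rw [← hVext]; exact hvV.1
      have hnegE : -v ∈ K.extremePoints ℝ := by
        refine ⟨hsymm v hvK, fun x₁ hx₁ x₂ hx₂ hseg => ?_⟩
        obtain ⟨a, b, ha, hb, hab, habv⟩ := hseg
        have hseg' : v ∈ openSegment ℝ (-x₁) (-x₂) :=
          ⟨a, b, ha, hb, hab, by rw [smul_neg, smul_neg, ← neg_add, habv, neg_neg]⟩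
        have h2 := hvE.2 (hsymm x₁ hx₁) (hsymm x₂ hx₂) hseg'
        rw [← neg_neg x₁, h2]
      rw [← hVext] at hnegE
      exact hnegE
    have hvne : -v ≠ v := by
      intro hc
      have h2 : ⟪-v, θ⟫ = ⟪v, θ⟫ := by rw [hc]
      rw [inner_neg_left] at h2
      linarith
    have hne' : (V.erase v).Nonempty := ⟨-v, Finset.mem_erase.2 ⟨hvne, hnegvV⟩⟩
    set m := (V.erase v).sup' hne' (fun w => ⟪w, θ⟫) with hmdef
    have hmlt : m < s₀ := by
      rw [hmdef, Finset.sup'_lt_iff]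
      intro w hw
      exact hother w (Finset.mem_erase.1 hw).2 (Finset.mem_erase.1 hw).1
    have hmh : m < suppFn K θ := hmlt.trans hs₀h
    have hmub : ∀ w ∈ V, w ≠ v → ⟪w, θ⟫ ≤ m := by
      intro w hw hwv
      rw [hmdef]
      exact Finset.le_sup' (fun w => ⟪w, θ⟫) (Finset.mem_erase.2 ⟨hwv, hw⟩)
    have hgiff : ∀ s' : ℝ, gCount V θ s' = 1 ↔ (m < s' ∧ s' ≤ suppFn K θ) := by
      intro s'
      constructor
      · intro h1
        rw [gCount, Set.ncard_eq_one] at h1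
        obtain ⟨u, hu⟩ := h1
        have hu1 : u ∈ {w ∈ (V : Set (Euc n)) | s' ≤ ⟪w, θ⟫} := hu ▸ rfl
        constructor
        · by_contra hc
          push_neg at hc
          obtain ⟨wmax, hwm, hweq⟩ := Finset.exists_mem_eq_sup' hne' (fun w => ⟪w, θ⟫)
          have hw1 : wmax ∈ {y ∈ (V : Set (Euc n)) | s' ≤ ⟪y, θ⟫} :=
            ⟨(Finset.mem_erase.1 hwm).2, by rw [hmdef] at hc; rw [hweq] at hc; exact hc⟩
          have hv1 : v ∈ {y ∈ (V : Set (Euc n)) | s' ≤ ⟪y, θ⟫} :=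
            ⟨hvV.1, hc.trans (le_of_lt (by rw [hvh]; exact hmh))⟩
          rw [hu] at hw1 hv1
          exact (Finset.mem_erase.1 hwm).1 (hw1.trans hv1.symm)
        · refine hu1.2.trans ?_
          rw [← hvh]
          exact hub u (hVK hu1.1)
      · rintro ⟨h1, h2⟩
        rw [gCount, Set.ncard_eq_one]
        refine ⟨v, ?_⟩
        ext u
        simp only [Set.mem_setOf_eq, Set.mem_singleton_iff]
        constructor
        · rintro ⟨huV, hus⟩
          by_contra huv
          have := hmub u huV huv
          linarith
        · rintro rfl
          exact ⟨hvV.1, by rw [hvh]; exact h2⟩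
    have hTIoc : {s' : ℝ | 0 < s' ∧ gCount V θ s' = 1} = Set.Ioc (max m 0) (suppFn K θ) := by
      ext s'
      simp only [Set.mem_setOf_eq, Set.mem_Ioc, hgiff, max_lt_iff]
      tauto
    have hmaxh : max m 0 < suppFn K θ := max_lt hmh hhpos
    have hσeq : sTheta V θ = max m 0 := by rw [sTheta, hTIoc, csInf_Ioc hmaxh]
    have hσ0 : 0 ≤ sTheta V θ := by rw [hσeq]; exact le_max_right _ _
    have hσm : m ≤ sTheta V θ := by rw [hσeq]; exact le_max_left _ _
    have hσh : sTheta V θ < suppFn K θ := by rw [hσeq]; exact hmaxh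
    have hn1 : 1 ≤ n := by
      by_contra hc
      push_neg at hc
      have h2 : ⟪θ, θ⟫ = (0:ℝ) := by
        rw [PiLp.inner_apply]
        exact Finset.sum_eq_zero fun i _ => absurd i.is_lt (by omega)
      rw [real_inner_self_eq_norm_mul_norm, hθ1] at h2
      norm_num at h2
    have hq : ∀ t : ℝ, 0 ≤ t → t ≤ suppFn K θ →
        (t / suppFn K θ) • v ∈ K ∩ {x : Euc n | ⟪x, θ⟫ = t} := by
      intro t ht0 ht1
      have htd1 : t / suppFn K θ ≤ 1 := (div_le_one hhpos).2 ht1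
      have hmem : (1 - t / suppFn K θ) • (0 : Euc n) + (t / suppFn K θ) • v ∈ K :=
        hKconv h0K hvK (by linarith) (div_nonneg ht0 hh0) (by ring)
      constructor
      · simpa using hmem
      · simp only [Set.mem_setOf_eq]
        rw [real_inner_smul_left, hvh]
        field_simp
    rcases eq_or_lt_of_le hn1 with hn1' | hn2
    · -- n = 1
      subst hn1'
      have hinner1 : ∀ x y : Euc 1, ⟪x, y⟫ = x 0 * y 0 := by
        intro x y
        rw [PiLp.inner_apply]
        simp [RCLike.inner_apply]
        ring
      have hθ00 : θ 0 * θ 0 = 1 := by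
        have h2 : ⟪θ, θ⟫ = (1 : ℝ) := by
          rw [real_inner_self_eq_norm_mul_norm, hθ1]; norm_num
        rw [hinner1] at h2
        exact h2
      have huniq : ∀ t : ℝ, ∀ x : Euc 1, ⟪x, θ⟫ = t → x = t • θ := by
        intro t x hxt
        rw [hinner1] at hxt
        ext i
        have hi : i = 0 := Subsingleton.elim i 0
        subst hi
        show x 0 = t * θ 0
        rw [← hxt]
        linear_combination (-(x 0)) * hθ00
      have hslice : ∀ t : ℝ, 0 ≤ t → t ≤ suppFn K θ →
          K ∩ {x : Euc 1 | ⟪x, θ⟫ = t} = {t • θ} := by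
        intro t h1 h2
        rw [Set.eq_singleton_iff_nonempty_unique_mem]
        exact ⟨⟨_, hq t h1 h2⟩, fun x hx => huniq t x hx.2⟩
      have hv1 : sliceVol K θ s = 1 := by
        rw [sliceVol, hslice s (hσ0.trans hs1) hs2]
        rw [show ((1:ℕ):ℝ) - 1 = (0:ℝ) by norm_num]
        rw [Measure.hausdorffMeasure_zero_singleton]
        simp
      have hv2 : sliceVol K θ (sTheta V θ) = 1 := by
        rw [sliceVol, hslice _ hσ0 hσh.le]
        rw [show ((1:ℕ):ℝ) - 1 = (0:ℝ) by norm_num]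
        rw [Measure.hausdorffMeasure_zero_singleton]
        simp
      rw [hv1, hv2]
      simp
    · -- 2 ≤ n
      have hd : (0:ℝ) < (n:ℝ) - 1 := by
        have h2 : (2:ℝ) ≤ (n:ℝ) := by exact_mod_cast hn2
        linarith
      set lam := (suppFn K θ - s) / (suppFn K θ - sTheta V θ) with hlamdef
      have hσhne : suppFn K θ - sTheta V θ ≠ 0 := by linarith
      have hcone : K ∩ {x : Euc n | ⟪x, θ⟫ = s} =
          (fun y => v + lam • (y - v)) '' (K ∩ {x : Euc n | ⟪x, θ⟫ = sTheta V θ}) := by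
        ext x
        constructor
        · rintro ⟨hxK, hxs⟩
          have hx' : x ∈ convexHull ℝ (V : Set (Euc n)) := hKV ▸ hxK
          obtain ⟨y, hy1, hy2, hy3⟩ := cone_rep V θ v hvV.1 m (sTheta V θ) hmub hσm
            (by rw [hvh]; exact hσh) 0 (hKV ▸ h0K) (by simpa using hσ0) hx'
          have hxs' : ⟪x, θ⟫ = s := hxs
          rw [hvh, hxs'] at hy3
          refine ⟨y, ⟨?_, hy2⟩, hy3.symm⟩
          rw [hKV]
          exact hy1
        · rintro ⟨y, ⟨hyK, hyσ⟩, rfl⟩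
          have hyσ' : ⟪y, θ⟫ = sTheta V θ := hyσ
          have hlam0 : 0 ≤ lam := div_nonneg (by linarith) (by linarith)
          have hlam1 : lam ≤ 1 := by
            rw [hlamdef, div_le_one (by linarith)]
            linarith
          refine ⟨?_, ?_⟩
          · show v + lam • (y - v) ∈ K
            have heq : v + lam • (y - v) = (1 - lam) • v + lam • y := by module
            rw [heq]
            exact hKconv hvK hyK (by linarith) hlam0 (by ring)
          · show v + lam • (y - v) ∈ {x : Euc n | ⟪x, θ⟫ = s}
            simp only [Set.mem_setOf_eq]
            rw [inner_add_left, real_inner_smul_left, inner_sub_left, hyσ', hvh]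
            have hgoal : ∀ A B : ℝ, A - B ≠ 0 → B ≤ A →
                A + (A - s) / (A - B) * (B - A) = s := by
              intro A B hAB _
              field_simp
              ring
            exact hgoal _ _ hσhne hσh.le
      rcases eq_or_lt_of_le hs2 with hsh | hsh
      · -- s = suppFn K θ, top slice
        have hlam0 : lam = 0 := by rw [hlamdef, hsh, sub_self, zero_div]
        have hSh : K ∩ {x : Euc n | ⟪x, θ⟫ = s} = {v} := by
          rw [hcone, hlam0]
          have hne2 : (K ∩ {x : Euc n | ⟪x, θ⟫ = sTheta V θ}).Nonempty :=
            ⟨_, hq _ hσ0 hσh.le⟩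
          simp only [zero_smul, add_zero]
          exact hne2.image_const v
        have hμ : μH[(n:ℝ)-1] ({v} : Set (Euc n)) = 0 := by
          rcases Measure.hausdorffMeasure_zero_or_top hd ({v} : Set (Euc n)) with h2 | h2
          · exact h2
          · exfalso
            rw [Measure.hausdorffMeasure_zero_singleton] at h2
            exact (by norm_num : (1:ℝ≥0∞) ≠ ∞) h2
        have hLHS : sliceVol K θ s = 0 := by rw [sliceVol, hSh, hμ]; simp
        rw [hLHS]
        have hfac : 1 - s / suppFn K θ = 0 := by
          rw [hsh, div_self hhpos.ne']
          ring
        rw [hfac, zero_div, zero_pow (by omega : n - 1 ≠ 0), mul_zero]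
      · -- sTheta ≤ s < suppFn K θ
        have hlampos : 0 < lam := div_pos (by linarith) (by linarith)
        have himg : (fun y => v + lam • (y - v)) '' (K ∩ {x : Euc n | ⟪x, θ⟫ = sTheta V θ}) =
            (fun u => (v - lam • v) + u) '' (lam • (K ∩ {x : Euc n | ⟪x, θ⟫ = sTheta V θ})) := by
          rw [← Set.image_smul, ← Set.image_comp]
          refine Set.image_congr fun y _ => ?_
          show v + lam • (y - v) = (v - lam • v) + lam • y
          module
        have hmeas : μH[(n:ℝ)-1] ((fun y => v + lam • (y - v)) ''
              (K ∩ {x : Euc n | ⟪x, θ⟫ = sTheta V θ})) =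
            (‖lam‖₊ ^ ((n:ℝ)-1) : ℝ≥0) * μH[(n:ℝ)-1] (K ∩ {x : Euc n | ⟪x, θ⟫ = sTheta V θ}) := by
          rw [himg]
          have h1 := (IsometryEquiv.addLeft (v - lam • v)).hausdorffMeasure_image ((n:ℝ)-1)
            (lam • (K ∩ {x : Euc n | ⟪x, θ⟫ = sTheta V θ}))
          have h2 : (fun u => (v - lam • v) + u) '' (lam • (K ∩ {x : Euc n | ⟪x, θ⟫ = sTheta V θ}))
              = (IsometryEquiv.addLeft (v - lam • v)) '' (lam • (K ∩ {x : Euc n | ⟪x, θ⟫ = sTheta V θ})) := rfl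
          rw [h2, h1, Measure.hausdorffMeasure_smul₀ hd.le hlampos.ne'
            (K ∩ {x : Euc n | ⟪x, θ⟫ = sTheta V θ})]
          rw [ENNReal.smul_def, smul_eq_mul]
        have hcast : (((‖lam‖₊ ^ ((n:ℝ)-1) : ℝ≥0) : ℝ≥0∞)).toReal = lam ^ (n - 1) := by
          rw [ENNReal.coe_toReal, NNReal.coe_rpow, coe_nnnorm, Real.norm_eq_abs,
            abs_of_pos hlampos]
          rw [show ((n:ℝ) - 1) = ((n - 1 : ℕ) : ℝ) by
            rw [Nat.cast_sub hn1, Nat.cast_one]]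
          exact Real.rpow_natCast lam (n - 1)
        have hfac : (1 - s / suppFn K θ) / (1 - sTheta V θ / suppFn K θ) = lam := by
          rw [hlamdef]
          rw [div_eq_div_iff (by
            have h3 : sTheta V θ / suppFn K θ < 1 := (div_lt_one hhpos).2 hσh
            intro hcon
            rw [sub_eq_zero] at hcon
            rw [← hcon] at h3
            exact lt_irrefl _ h3) hσhne]
          field_simp
        rw [sliceVol, hcone, hmeas, ENNReal.toReal_mul, hcast, hfac, sliceVol]
        ring
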